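/- For every r with 1/2 ≤ r ≤ 1, letting μ₁(r) = ∫_{ℝ} z·ν(z, r) dz and σ²(r) = ∫_{ℝ} z²·ν(z, r) dz − μ₁(r)², one has (log 2)² · σ²(r) < 79. In particular, σ²(r) ≤ ∫_{ℝ} z²·ν(z, r) dz < 164. -/

import Mathlib

open MeasureTheory

/-- The density `ν(z, r)` of the highest position of an F-PCSA subsketch. -/
noncomputable def nu (z r : ℝ) : ℝ :=
  (1 - Real.exp (-(2:ℝ) ^ (-z))) * r *
    ∏' j : ℕ, (1 - (1 - Real.exp (-(2:ℝ) ^ (-z - ((j : ℝ) + 1)))) * r)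

namespace StmtAux

open Real Set Finset Filter

/-- The `j`-th factor of the infinite product in `nu`. -/
noncomputable def fac (r z : ℝ) (j : ℕ) : ℝ :=
  1 - (1 - Real.exp (-(2:ℝ) ^ (-z - ((j : ℝ) + 1)))) * r

lemma nu_eq (z r : ℝ) :
    nu z r = (1 - Real.exp (-(2:ℝ) ^ (-z))) * r * ∏' j : ℕ, fac r z j := rfl

lemma exp_le_fac {r : ℝ} (h1 : r ≤ 1) (z : ℝ) (j : ℕ) :
    Real.exp (-(2:ℝ) ^ (-z - ((j : ℝ) + 1))) ≤ fac r z j := by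
  set x : ℝ := (2:ℝ) ^ (-z - ((j : ℝ) + 1)) with hx
  have hx0 : 0 < x := Real.rpow_pos_of_pos two_pos _
  have he1 : Real.exp (-x) ≤ 1 := Real.exp_le_one_iff.mpr (by linarith)
  have : (1 - Real.exp (-x)) * r ≤ (1 - Real.exp (-x)) * 1 :=
    mul_le_mul_of_nonneg_left h1 (by linarith)
  simp only [fac]
  nlinarith

lemma fac_pos {r : ℝ} (h1 : r ≤ 1) (z : ℝ) (j : ℕ) : 0 < fac r z j :=
  lt_of_lt_of_le (Real.exp_pos _) (exp_le_fac h1 z j)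

lemma fac_le_one {r : ℝ} (h0 : 0 ≤ r) (z : ℝ) (j : ℕ) : fac r z j ≤ 1 := by
  set x : ℝ := (2:ℝ) ^ (-z - ((j : ℝ) + 1)) with hx
  have hx0 : 0 < x := Real.rpow_pos_of_pos two_pos _
  have he1 : Real.exp (-x) ≤ 1 := Real.exp_le_one_iff.mpr (by linarith)
  have : 0 ≤ (1 - Real.exp (-x)) * r := mul_nonneg (by linarith) h0
  simp only [fac]
  linarith

lemma rpow_split (z : ℝ) (j : ℕ) :
    (2:ℝ) ^ (-z - ((j : ℝ) + 1)) = (2:ℝ) ^ (-z - 1) * (1/2 : ℝ) ^ j := by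
  have : -z - ((j : ℝ) + 1) = (-z - 1) + (-(j : ℝ)) := by ring
  rw [this, Real.rpow_add two_pos, Real.rpow_neg (by norm_num), Real.rpow_natCast]
  rw [one_div, inv_pow]

lemma summable_log {r : ℝ} (h0 : 0 ≤ r) (h1 : r ≤ 1) (z : ℝ) :
    Summable fun j : ℕ => Real.log (fac r z j) := by
  have key : ∀ j : ℕ, -Real.log (fac r z j) ≤ (2:ℝ) ^ (-z - 1) * (1/2 : ℝ) ^ j := by
    intro j
    have hle : Real.exp (-(2:ℝ) ^ (-z - ((j : ℝ) + 1))) ≤ fac r z j := exp_le_fac h1 z j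
    have := Real.log_le_log (Real.exp_pos _) hle
    rw [Real.log_exp] at this
    rw [← rpow_split z j]
    linarith
  have hnn : ∀ j : ℕ, 0 ≤ -Real.log (fac r z j) := by
    intro j
    have := Real.log_nonpos (fac_pos h1 z j).le (fac_le_one h0 z j)
    linarith
  have hs : Summable fun j : ℕ => (2:ℝ) ^ (-z - 1) * (1/2 : ℝ) ^ j :=
    (summable_geometric_of_lt_one (by norm_num) (by norm_num)).mul_left _
  have : Summable fun j : ℕ => -Real.log (fac r z j) :=
    Summable.of_nonneg_of_le hnn key hs
  simpa using this.neg

lemma multipliable_fac {r : ℝ} (h0 : 0 ≤ r) (h1 : r ≤ 1) (z : ℝ) :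
    Multipliable (fac r z) := by
  exact Real.multipliable_of_summable_log (fun j => fac_pos h1 z j) (summable_log h0 h1 z)

lemma tendsto_partial {r : ℝ} (h0 : 0 ≤ r) (h1 : r ≤ 1) (z : ℝ) :
    Tendsto (fun n : ℕ => ∏ j ∈ Finset.range n, fac r z j) atTop
      (nhds (∏' j : ℕ, fac r z j)) :=
  (multipliable_fac h0 h1 z).hasProd.tendsto_prod_nat

lemma tprod_nonneg {r : ℝ} (h0 : 0 ≤ r) (h1 : r ≤ 1) (z : ℝ) :
    0 ≤ ∏' j : ℕ, fac r z j :=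
  ge_of_tendsto (tendsto_partial h0 h1 z)
    (Eventually.of_forall fun n => Finset.prod_nonneg fun j _ => (fac_pos h1 z j).le)

lemma tprod_le_prod {r : ℝ} (h0 : 0 ≤ r) (h1 : r ≤ 1) (z : ℝ) (n : ℕ) :
    (∏' j : ℕ, fac r z j) ≤ ∏ j ∈ Finset.range n, fac r z j := by
  refine le_of_tendsto (tendsto_partial h0 h1 z) ?_
  filter_upwards [eventually_ge_atTop n] with m hm
  rw [← Finset.prod_range_mul_prod_Ico _ hm]
  have h1' : ∏ j ∈ Finset.Ico n m, fac r z j ≤ 1 :=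
    Finset.prod_le_one (fun j _ => (fac_pos h1 z j).le) (fun j _ => fac_le_one h0 z j)
  have h0' : 0 ≤ ∏ j ∈ Finset.range n, fac r z j :=
    Finset.prod_nonneg fun j _ => (fac_pos h1 z j).le
  exact mul_le_of_le_one_right h0' h1'

lemma tprod_le_one {r : ℝ} (h0 : 0 ≤ r) (h1 : r ≤ 1) (z : ℝ) :
    (∏' j : ℕ, fac r z j) ≤ 1 := by
  simpa using tprod_le_prod h0 h1 z 0

lemma nu_nonneg {r : ℝ} (h0 : 0 ≤ r) (h1 : r ≤ 1) (z : ℝ) : 0 ≤ nu z r := by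
  rw [nu_eq]
  have hx0 : (0:ℝ) < (2:ℝ) ^ (-z) := Real.rpow_pos_of_pos two_pos _
  have he1 : Real.exp (-(2:ℝ) ^ (-z)) ≤ 1 := Real.exp_le_one_iff.mpr (by linarith)
  exact mul_nonneg (mul_nonneg (by linarith) h0) (tprod_nonneg h0 h1 z)

lemma exp_third_le : Real.exp (1/3 : ℝ) ≤ 10/7 := by
  have h3 : (Real.exp (1/3 : ℝ)) ^ 3 = Real.exp 1 := by
    rw [← Real.exp_nat_mul]
    norm_num
  have he : Real.exp 1 < 2.7182818286 := Real.exp_one_lt_d9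
  have hcube : Real.exp (1/3 : ℝ) ^ 3 ≤ (10/7 : ℝ) ^ 3 := by
    rw [h3]; norm_num; linarith
  exact le_of_pow_le_pow_left₀ (by norm_num) (by norm_num) hcube

lemma seven_tenths_le : (7/10 : ℝ) ≤ Real.exp (-(1/3) : ℝ) := by
  rw [show (-(1/3) : ℝ) = -(1/3 : ℝ) by norm_num, Real.exp_neg]
  rw [le_inv_comm₀ (by norm_num) (Real.exp_pos _)]
  calc Real.exp (1/3 : ℝ) ≤ 10/7 := exp_third_le
    _ = (7/10 : ℝ)⁻¹ := by norm_num

/-- Key pointwise bound: `nu z r ≤ exp ((1 - |z|)/3)`. -/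
lemma nu_le {r : ℝ} (hr0 : 1/2 ≤ r) (hr1 : r ≤ 1) (z : ℝ) :
    nu z r ≤ Real.exp ((1 - |z|) / 3) := by
  have h0 : 0 ≤ r := by linarith
  have hT0 : 0 ≤ ∏' j : ℕ, fac r z j := tprod_nonneg h0 hr1 z
  have hT1 : (∏' j : ℕ, fac r z j) ≤ 1 := tprod_le_one h0 hr1 z
  have hx0 : (0:ℝ) < (2:ℝ) ^ (-z) := Real.rpow_pos_of_pos two_pos _
  have he1 : Real.exp (-(2:ℝ) ^ (-z)) ≤ 1 := Real.exp_le_one_iff.mpr (by linarith)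
  have hA0 : 0 ≤ 1 - Real.exp (-(2:ℝ) ^ (-z)) := by linarith
  rcases le_or_gt 0 z with hz | hz
  · -- z ≥ 0
    rw [abs_of_nonneg hz]
    have step1 : nu z r ≤ 1 - Real.exp (-(2:ℝ) ^ (-z)) := by
      rw [nu_eq]
      calc (1 - Real.exp (-(2:ℝ) ^ (-z))) * r * ∏' j : ℕ, fac r z j
          ≤ (1 - Real.exp (-(2:ℝ) ^ (-z))) * r :=
            mul_le_of_le_one_right (mul_nonneg hA0 h0) hT1
        _ ≤ 1 - Real.exp (-(2:ℝ) ^ (-z)) := mul_le_of_le_one_right hA0 hr1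
    have step2 : 1 - Real.exp (-(2:ℝ) ^ (-z)) ≤ (2:ℝ) ^ (-z) := by
      nlinarith [Real.add_one_le_exp (-(2:ℝ) ^ (-z))]
    have step3 : (2:ℝ) ^ (-z) ≤ Real.exp ((1 - z) / 3) := by
      rw [Real.rpow_def_of_pos two_pos]
      apply Real.exp_le_exp.mpr
      have hlog : 0.6931471803 < Real.log 2 := Real.log_two_gt_d9
      nlinarith
    linarith
  · -- z < 0
    rw [abs_of_neg hz]
    set n : ℕ := ⌊-z⌋₊ with hn
    have hz' : (0:ℝ) ≤ -z := by linarith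
    have hn_le : (n : ℝ) ≤ -z := Nat.floor_le hz'
    have hn_gt : -z < (n : ℝ) + 1 := Nat.lt_floor_add_one _
    have hstep : ∀ j ∈ Finset.range n, fac r z j ≤ 7/10 := by
      intro j hj
      have hj' : (j : ℝ) + 1 ≤ (n : ℝ) := by
        have := Finset.mem_range.mp hj
        exact_mod_cast this
      have hx1 : (1:ℝ) ≤ (2:ℝ) ^ (-z - ((j : ℝ) + 1)) :=
        Real.one_le_rpow one_le_two (by linarith)
      have hexp : Real.exp (-(2:ℝ) ^ (-z - ((j : ℝ) + 1))) ≤ Real.exp (-1) :=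
        Real.exp_le_exp.mpr (by linarith)
      have hexp1 : Real.exp (-1 : ℝ) ≤ 2/5 := by
        rw [Real.exp_neg]
        rw [inv_le_comm₀ (Real.exp_pos _) (by norm_num)]
        have := Real.exp_one_gt_d9
        linarith
      simp only [fac]
      nlinarith
    have hprod : (∏ j ∈ Finset.range n, fac r z j) ≤ (7/10 : ℝ) ^ n := by
      calc (∏ j ∈ Finset.range n, fac r z j)
          ≤ ∏ _j ∈ Finset.range n, (7/10 : ℝ) :=
            Finset.prod_le_prod (fun j _ => (fac_pos hr1 z j).le) hstep
        _ = (7/10 : ℝ) ^ n := by simp [div_pow]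
    have hnu_T : nu z r ≤ ∏' j : ℕ, fac r z j := by
      rw [nu_eq]
      have hAr : (1 - Real.exp (-(2:ℝ) ^ (-z))) * r ≤ 1 :=
        mul_le_one₀ (by nlinarith [Real.exp_pos (-(2:ℝ) ^ (-z))]) h0 hr1
      calc (1 - Real.exp (-(2:ℝ) ^ (-z))) * r * ∏' j : ℕ, fac r z j
          ≤ 1 * ∏' j : ℕ, fac r z j :=
            mul_le_mul_of_nonneg_right hAr hT0
        _ = ∏' j : ℕ, fac r z j := one_mul _
    have hpow : (7/10 : ℝ) ^ n ≤ Real.exp (-(1/3) : ℝ) ^ n :=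
      pow_le_pow_left₀ (by norm_num) seven_tenths_le n
    have hexp_pow : Real.exp (-(1/3) : ℝ) ^ n = Real.exp (-(n : ℝ)/3) := by
      rw [← Real.exp_nat_mul]
      ring_nf
    have hfinal : Real.exp (-(n : ℝ)/3) ≤ Real.exp ((1 + z) / 3) :=
      Real.exp_le_exp.mpr (by linarith)
    calc nu z r ≤ ∏' j : ℕ, fac r z j := hnu_T
      _ ≤ ∏ j ∈ Finset.range n, fac r z j := tprod_le_prod h0 hr1 z n
      _ ≤ (7/10 : ℝ) ^ n := hprod
      _ ≤ Real.exp (-(1/3) : ℝ) ^ n := hpow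
      _ = Real.exp (-(n : ℝ)/3) := hexp_pow
      _ ≤ Real.exp ((1 + z) / 3) := hfinal
      _ = Real.exp ((1 - -z) / 3) := by ring_nf

lemma measurable_nu {r : ℝ} (h0 : 0 ≤ r) (h1 : r ≤ 1) : Measurable fun z : ℝ => nu z r := by
  have hfac : ∀ j : ℕ, Measurable fun z : ℝ => fac r z j := by
    intro j
    have : (fun z : ℝ => fac r z j) =
        fun z => 1 - (1 - Real.exp (-(Real.exp (Real.log 2 * (-z - ((j : ℝ) + 1)))))) * r := by
      funext z
      rw [fac, Real.rpow_def_of_pos two_pos]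
    rw [this]
    fun_prop
  have hP : ∀ n : ℕ, Measurable fun z : ℝ => ∏ j ∈ Finset.range n, fac r z j := by
    intro n
    exact Finset.measurable_prod _ fun j _ => hfac j
  have hT : Measurable fun z : ℝ => ∏' j : ℕ, fac r z j :=
    measurable_of_tendsto_metrizable hP
      (tendsto_pi_nhds.mpr fun z => (multipliable_fac h0 h1 z).hasProd.tendsto_prod_nat)
  have hA : Measurable fun z : ℝ => (1 - Real.exp (-(2:ℝ) ^ (-z))) * r := by
    have : (fun z : ℝ => (1 - Real.exp (-(2:ℝ) ^ (-z))) * r) =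
        fun z => (1 - Real.exp (-(Real.exp (Real.log 2 * (-z))))) * r := by
      funext z
      rw [Real.rpow_def_of_pos two_pos]
    rw [this]
    fun_prop
  exact hA.mul hT

/-- Comparison function `x² e^{-x/3}`. -/
noncomputable def F : ℝ → ℝ := fun x => x ^ 2 * Real.exp (-(1/3 * x))

lemma F_int_Ioi : IntegrableOn F (Ioi (0:ℝ)) := by
  have h := integrableOn_rpow_mul_exp_neg_mul_rpow (p := 1) (s := 2) (b := 1/3)
    (by norm_num) (by norm_num) (by norm_num)
  have heq : (fun x : ℝ => x ^ (2:ℝ) * Real.exp (-(1/3:ℝ) * x ^ (1:ℝ))) = F := by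
    funext x
    rw [Real.rpow_one, show ((2:ℝ)) = ((2:ℕ):ℝ) by norm_num, Real.rpow_natCast]
    simp only [F]
    ring_nf
  rwa [heq] at h

lemma F_integral : ∫ x in Ioi (0:ℝ), F x = 54 := by
  have h := Real.integral_rpow_mul_exp_neg_mul_Ioi (a := 3) (r := 1/3)
    (by norm_num) (by norm_num)
  have heq : (fun t : ℝ => t ^ ((3:ℝ) - 1) * Real.exp (-(1/3 * t))) = F := by
    funext t
    rw [show ((3:ℝ) - 1) = ((2:ℕ):ℝ) by norm_num, Real.rpow_natCast]
    simp only [F]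
  rw [heq] at h
  rw [h]
  have h27 : (1 / (1/3 : ℝ)) ^ (3:ℝ) = 27 := by
    rw [show (1 / (1/3 : ℝ)) = (3:ℝ) by norm_num,
      show ((3:ℝ)) = ((3:ℕ):ℝ) by norm_num, Real.rpow_natCast]
    norm_num
  have hG : Real.Gamma 3 = 2 := by
    rw [show (3:ℝ) = ((2:ℕ):ℝ) + 1 by norm_num, Real.Gamma_nat_eq_factorial]
    norm_num
  rw [h27, hG]
  norm_num

lemma Fabs_int_Ioi : IntegrableOn (fun z : ℝ => F |z|) (Ioi (0:ℝ)) :=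
  F_int_Ioi.congr_fun (fun x hx => by rw [abs_of_pos hx]) measurableSet_Ioi

lemma Fabs_int : Integrable (fun z : ℝ => F |z|) := by
  have hIic : IntegrableOn (fun z : ℝ => F |z|) (Iic (0:ℝ)) := by
    rw [← Measure.map_neg_eq_self (volume : Measure ℝ)]
    let m : MeasurableEmbedding fun x : ℝ => -x := (Homeomorph.neg ℝ).measurableEmbedding
    rw [m.integrableOn_map_iff]
    simp_rw [Function.comp_def, abs_neg, neg_preimage, neg_Iic, neg_zero]
    exact Iff.mpr integrableOn_Ici_iff_integrableOn_Ioi Fabs_int_Ioi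
  rw [← integrableOn_univ, ← Set.Iic_union_Ioi (a := (0:ℝ))]
  exact hIic.union Fabs_int_Ioi

lemma Fabs_integral : (∫ z : ℝ, F |z|) = 108 := by
  rw [integral_comp_abs (f := F), F_integral]
  norm_num

lemma G_eq (z : ℝ) : Real.exp (1/3 : ℝ) * F |z| = z ^ 2 * Real.exp ((1 - |z|) / 3) := by
  have h : Real.exp (1/3 : ℝ) * Real.exp (-(1/3 * |z|)) = Real.exp ((1 - |z|) / 3) := by
    rw [← Real.exp_add]
    ring_nf
  calc Real.exp (1/3 : ℝ) * F |z|
      = |z| ^ 2 * (Real.exp (1/3 : ℝ) * Real.exp (-(1/3 * |z|))) := by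
        simp only [F]; ring
    _ = z ^ 2 * Real.exp ((1 - |z|) / 3) := by rw [h, sq_abs]

end StmtAux

/-- Uniform variance bound from Theorem A.3 of the paper: for `1/2 ≤ r ≤ 1`,
with `μ₁(r)` and `σ²(r)` the mean and variance of the density `ν(·, r)`,
`(log 2)² σ²(r) < 79`; in particular `σ²(r) ≤ ∫ z² ν(z,r) dz < 164`. -/
theorem stmt_19 (r : ℝ) (hr0 : 1/2 ≤ r) (hr1 : r ≤ 1) :
    (Real.log 2) ^ 2 *
        ((∫ z : ℝ, z ^ 2 * nu z r) - (∫ z : ℝ, z * nu z r) ^ 2) < 79 ∧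
      ((∫ z : ℝ, z ^ 2 * nu z r) - (∫ z : ℝ, z * nu z r) ^ 2
        ≤ ∫ z : ℝ, z ^ 2 * nu z r) ∧
      (∫ z : ℝ, z ^ 2 * nu z r) < 164 := by
  have h0 : 0 ≤ r := by linarith
  have key : ∀ z : ℝ, z ^ 2 * nu z r ≤ Real.exp (1/3 : ℝ) * StmtAux.F |z| := by
    intro z
    rw [StmtAux.G_eq]
    exact mul_le_mul_of_nonneg_left (StmtAux.nu_le hr0 hr1 z) (sq_nonneg z)
  have hG_int : Integrable (fun z : ℝ => Real.exp (1/3 : ℝ) * StmtAux.F |z|) :=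
    StmtAux.Fabs_int.const_mul _
  have hnn : ∀ z : ℝ, 0 ≤ z ^ 2 * nu z r := fun z =>
    mul_nonneg (sq_nonneg z) (StmtAux.nu_nonneg h0 hr1 z)
  have hmeas : AEStronglyMeasurable (fun z : ℝ => z ^ 2 * nu z r) volume :=
    ((measurable_id.pow_const 2).mul (StmtAux.measurable_nu h0 hr1)).aestronglyMeasurable
  have hint : Integrable (fun z : ℝ => z ^ 2 * nu z r) := by
    refine hG_int.mono' hmeas (Filter.Eventually.of_forall fun z => ?_)
    rw [Real.norm_eq_abs, abs_of_nonneg (hnn z)]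
    exact key z
  have hGval : (∫ z : ℝ, Real.exp (1/3 : ℝ) * StmtAux.F |z|) = 108 * Real.exp (1/3 : ℝ) := by
    rw [integral_const_mul, StmtAux.Fabs_integral]
    ring
  have hI2le : (∫ z : ℝ, z ^ 2 * nu z r) ≤ 108 * Real.exp (1/3 : ℝ) := by
    rw [← hGval]
    exact integral_mono hint hG_int key
  have h107 : Real.exp (1/3 : ℝ) ≤ 10/7 := StmtAux.exp_third_le
  have hI2lt : (∫ z : ℝ, z ^ 2 * nu z r) < 164 := by nlinarith
  have hI2nn : (0:ℝ) ≤ ∫ z : ℝ, z ^ 2 * nu z r := integral_nonneg hnn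
  refine ⟨?_, by nlinarith [sq_nonneg (∫ z : ℝ, z * nu z r)], hI2lt⟩
  have hlog0 : 0 ≤ Real.log 2 := Real.log_nonneg one_le_two
  have hlog : Real.log 2 < 0.6931471808 := Real.log_two_lt_d9
  have hsq : Real.log 2 ^ 2 ≤ (0.6931471808 : ℝ) ^ 2 :=
    pow_le_pow_left₀ hlog0 hlog.le 2
  nlinarith [sq_nonneg (∫ z : ℝ, z * nu z r), sq_nonneg (Real.log 2), hI2lt, hI2nn, hsq,
    mul_nonneg (sq_nonneg (Real.log 2)) (sq_nonneg (∫ z : ℝ, z * nu z r))]
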